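/- The number of c in GF(q⁴) with Tr_{GF(q⁴)/GF(q)}(c) ≠ 1 and Tr_{GF(q)/GF(2)}((1+c+c^{q²})^{q+1}) = 0 equals (q⁴ - q³)/2. -/

import Mathlib

open Finset Polynomial


lemma roots_card_le {F : Type*} [Field F] [DecidableEq F] (s : Finset F) (p : F[X]) (hp : p ≠ 0)
    (h : ∀ x ∈ s, p.eval x = 0) : s.card ≤ p.natDegree := by
  apply Polynomial.card_le_degree_of_subset_roots
  intro x hx
  rw [Polynomial.mem_roots hp]
  exact h x (by simpa using hx)

lemma tele {F : Type*} [Field F] [CharP F 2] (k : ℕ) (u : F) :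
    ∑ i ∈ Finset.range k, (u^2 + u)^(2^i) = u^(2^k) + u := by
  have h : ∀ i : ℕ, (u^2 + u)^(2^i) = u^(2^(i+1)) - u^(2^i) := by
    intro i
    rw [add_pow_char_pow, CharTwo.sub_eq_add, ← pow_mul]
    congr 2
    rw [pow_succ]
    ring
  simp_rw [h]
  rw [Finset.sum_range_sub (fun i => u^(2^i)), pow_zero, pow_one, CharTwo.sub_eq_add]

lemma card_filter_eq_image_mul {α β : Type*} [DecidableEq β] (s : Finset α) (f : α → β) (N : ℕ)
    (hfib : ∀ b ∈ s.image f, (s.filter (fun x => f x = b)).card = N) :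
    s.card = (s.image f).card * N := by
  rw [Finset.card_eq_sum_card_image f s, Finset.sum_congr rfl hfib, Finset.sum_const, smul_eq_mul]

lemma group_count {α : Type*} [Fintype α] [DecidableEq α] (f : α → α) (K : Finset α) (N : ℕ)
    (himg : Finset.univ.image f = K)
    (hfib : ∀ b ∈ K, ((Finset.univ : Finset α).filter (fun c => f c = b)).card = N)
    (P : α → Prop) [DecidablePred P] :
    (Finset.univ.filter (fun c => P (f c))).card = N * (K.filter P).card := by
  have hmaps : ∀ c ∈ Finset.univ.filter (fun c => P (f c)), f c ∈ K.filter P := by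
    intro c hc
    rw [Finset.mem_filter] at hc ⊢
    exact ⟨himg ▸ Finset.mem_image_of_mem f (Finset.mem_univ c), hc.2⟩
  rw [Finset.card_eq_sum_card_fiberwise hmaps]
  have hcong : ∀ b ∈ K.filter P, ((Finset.univ.filter (fun c => P (f c))).filter (fun c => f c = b)).card = N := by
    intro b hb
    rw [Finset.mem_filter] at hb
    rw [Finset.filter_filter]
    have heq : Finset.univ.filter (fun c => P (f c) ∧ f c = b) = Finset.univ.filter (fun c => f c = b) := by
      apply Finset.filter_congr
      intro c _
      constructor
      · exact And.right
      · intro h; exact ⟨by rw [h]; exact hb.2, h⟩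
    rw [heq]
    exact hfib b hb.1
  rw [Finset.sum_congr rfl hcong, Finset.sum_const, smul_eq_mul, mul_comm]

theorem stmt16 (k : ℕ) (hk : 0 < k) (q : ℕ) (hq : q = 2^k) {F : Type*} [Field F] [Fintype F] [DecidableEq F] (hF : Fintype.card F = q^4) :
    (Finset.univ.filter (fun c : F => (c + c^q + c^(q^2) + c^(q^3)) ≠ 1 ∧ (∑ i ∈ Finset.range k, ((1+c+c^(q^2))^(q+1))^(2^i)) = 0)).card = (q^4 - q^3) / 2 := by
  have hq1 : 2 ≤ q := by
    rw [hq]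
    calc 2 = 2^1 := (pow_one 2).symm
    _ ≤ 2^k := Nat.pow_le_pow_right (by norm_num) hk
  haveI hchar : CharP F 2 := by
    obtain ⟨n, hn, hcard⟩ := FiniteField.card F (ringChar F)
    have h2 : ringChar F = 2 := by
      have hdvd : ringChar F ∣ 2 ^ (k * 4) := by
        have : (ringChar F)^(n:ℕ) = 2^(k*4) := by
          rw [← hcard, hF, hq, ← pow_mul]
        rw [← this]
        exact dvd_pow_self _ (by positivity)
      have := hn.dvd_of_dvd_pow hdvd
      exact (Nat.prime_dvd_prime_iff_eq hn Nat.prime_two).mp this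
    have := ringChar.charP F
    rwa [h2] at this
  have htwo : (2:F) = 0 := CharTwo.two_eq_zero
  have frq : ∀ a b : F, (a+b)^q = a^q + b^q := by
    intro a b; rw [hq]; exact add_pow_char_pow a b 2 k
  have frq2 : ∀ a b : F, (a+b)^(q^2) = a^(q^2) + b^(q^2) := by
    intro a b
    have h : q^2 = 2^(2*k) := by rw [hq, ← pow_mul]; ring_nf
    rw [h]; exact add_pow_char_pow a b 2 (2*k)
  have hx4 : ∀ x : F, (x^(q^2))^(q^2) = x := by
    intro x
    rw [← pow_mul, show q^2*q^2 = q^4 by ring, ← hF]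
    exact FiniteField.pow_card x
  classical
  set K2 : Finset F := univ.filter (fun x : F => x^(q^2) = x) with hK2def
  have hK2mem : ∀ x : F, x ∈ K2 ↔ x^(q^2) = x := by
    intro x; simp [hK2def]
  have hK2le : K2.card ≤ q^2 := by
    have h := roots_card_le K2 (X^(q^2) - X) ?_ ?_
    · refine h.trans ?_
      refine (Polynomial.natDegree_sub_le _ _).trans ?_
      simp [Polynomial.natDegree_X_pow]
      nlinarith [hq1]
    · intro hcontra
      have h1 : (X^(q^2) - X : F[X]).coeff (q^2) = 1 := by
        rw [Polynomial.coeff_sub, Polynomial.coeff_X_pow, Polynomial.coeff_X]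
        rw [if_pos rfl, if_neg (by nlinarith [hq1])]
        ring
      rw [hcontra] at h1
      simp at h1
    · intro x hx
      rw [hK2mem] at hx
      simp [hx]
  set rho : F → F := fun c => 1 + c + c^(q^2) with hrho
  have hrhomem : ∀ c : F, rho c ∈ K2 := by
    intro c
    rw [hK2mem, hrho]
    show (1 + c + c^(q^2))^(q^2) = _
    rw [frq2, frq2, one_pow, hx4]
    ring
  have hrhofib : ∀ b ∈ (univ : Finset F).image rho,
      ((univ : Finset F).filter (fun c => rho c = b)).card = K2.card := by
    intro b hb
    obtain ⟨c₀, -, hc₀⟩ := Finset.mem_image.mp hb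
    apply Finset.card_nbij' (fun c => c + c₀) (fun x => x + c₀)
    · intro a ha
      rw [Finset.mem_coe] at ha ⊢
      simp only [mem_filter, mem_univ, true_and] at ha
      rw [hK2mem, frq2]
      have h1 : 1 + a + a^(q^2) = 1 + c₀ + c₀^(q^2) := by
        show rho a = rho c₀
        rw [ha, hc₀]
      linear_combination h1 + (c₀^(q^2) - a) * htwo
    · intro x hx
      rw [Finset.mem_coe] at hx ⊢
      rw [hK2mem] at hx
      simp only [mem_filter, mem_univ, true_and]
      have hb' : 1 + c₀ + c₀^(q^2) = b := hc₀
      show 1 + (x + c₀) + (x + c₀)^(q^2) = b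
      rw [frq2, hx]
      linear_combination hb' + x * htwo
    · intro a _; linear_combination c₀ * htwo
    · intro x _; linear_combination c₀ * htwo
  have himgrho : (univ : Finset F).image rho ⊆ K2 := by
    intro b hb
    obtain ⟨c, -, hc⟩ := Finset.mem_image.mp hb
    exact hc ▸ hrhomem c
  have hcount : q^4 = ((univ : Finset F).image rho).card * K2.card := by
    rw [← card_filter_eq_image_mul univ rho K2.card hrhofib, Finset.card_univ, hF]
  have hK2card : K2.card = q^2 := by
    have h2 : q^4 ≤ K2.card * K2.card := by
      rw [hcount]
      exact Nat.mul_le_mul_right _ (Finset.card_le_card himgrho)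
    have h3 : q^4 = q^2 * q^2 := by ring
    nlinarith [hK2le, h2]
  have himgrhoeq : (univ : Finset F).image rho = K2 := by
    apply Finset.eq_of_subset_of_card_le himgrho
    have : ((univ : Finset F).image rho).card * K2.card = K2.card * K2.card := by
      rw [← hcount, hK2card]; ring
    have hpos : 0 < K2.card := by rw [hK2card]; positivity
    have := Nat.eq_of_mul_eq_mul_right hpos this
    omega
  have hstep1 : (Finset.univ.filter (fun c : F => (c + c^q + c^(q^2) + c^(q^3)) ≠ 1 ∧ (∑ i ∈ Finset.range k, ((1+c+c^(q^2))^(q+1))^(2^i)) = 0))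
      = Finset.univ.filter (fun c : F => (fun u : F => u + u^q ≠ 1 ∧ ∑ i ∈ Finset.range k, (u^(q+1))^(2^i) = 0) (rho c)) := by
    apply Finset.filter_congr
    intro c _
    simp only [hrho]
    have e1 : (1 + c + c^(q^2)) + ((1 + c + c^(q^2)))^q = c + c^q + c^(q^2) + c^(q^3) := by
      rw [frq, frq, one_pow, ← pow_mul, show q^2*q = q^3 by ring]
      linear_combination htwo
    rw [e1]
  rw [hstep1, group_count rho K2 (q^2) himgrhoeq (fun b hb => by
      rw [hrhofib b (himgrhoeq ▸ hb), hK2card])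
      (fun u : F => u + u^q ≠ 1 ∧ ∑ i ∈ Finset.range k, (u^(q+1))^(2^i) = 0)]
  have hstep4 : K2.filter (fun u : F => u + u^q ≠ 1 ∧ ∑ i ∈ Finset.range k, (u^(q+1))^(2^i) = 0)
      = K2.filter (fun u : F => ∑ i ∈ Finset.range k, (u^(q+1))^(2^i) = 0) := by
    apply Finset.filter_congr
    intro u _
    constructor
    · exact And.right
    · intro hsum
      refine ⟨?_, hsum⟩
      intro heq
      have hqu : u^q = 1 + u := by linear_combination heq - u * htwo
      have hpow : u^(q+1) = u^2 + u := by
        rw [pow_succ, hqu]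
        ring
      rw [hpow, tele, ← hq, hqu] at hsum
      have h10 : (1:F) = 0 := by linear_combination hsum - u * htwo
      exact one_ne_zero h10
  rw [hstep4]
  -- K1 machinery
  set K1 : Finset F := univ.filter (fun x : F => x^q = x) with hK1def
  have hK1mem : ∀ x : F, x ∈ K1 ↔ x^q = x := by intro x; simp [hK1def]
  have hK1le : K1.card ≤ q := by
    have h := roots_card_le K1 (X^q - X) ?_ ?_
    · refine h.trans ?_
      refine (Polynomial.natDegree_sub_le _ _).trans ?_
      simp [Polynomial.natDegree_X_pow]
      omega
    · intro hcontra
      have h1 : (X^q - X : F[X]).coeff q = 1 := by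
        rw [Polynomial.coeff_sub, Polynomial.coeff_X_pow, Polynomial.coeff_X]
        rw [if_pos rfl, if_neg (by omega)]
        ring
      rw [hcontra] at h1
      simp at h1
    · intro x hx
      rw [hK1mem] at hx
      simp [hx]
  have hK1K2 : ∀ x : F, x^q = x → x^(q^2) = x := by
    intro x hx
    rw [show q^2 = q*q by ring, pow_mul, hx, hx]
  set tau : F → F := fun x => x + x^q with htau
  have htaufib : ∀ b ∈ K2.image tau, (K2.filter (fun x => tau x = b)).card = K1.card := by
    intro b hb
    obtain ⟨x₀, hx₀K, hx₀⟩ := Finset.mem_image.mp hb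
    rw [hK2mem] at hx₀K
    apply Finset.card_nbij' (fun c => c + x₀) (fun a => a + x₀)
    · intro c hc
      rw [Finset.mem_coe] at hc ⊢
      rw [Finset.mem_filter] at hc
      rw [hK1mem, frq]
      have h1 : c + c^q = x₀ + x₀^q := by rw [show c + c^q = tau c from rfl, hc.2, ← hx₀]
      linear_combination h1 + (x₀^q - c) * htwo
    · intro a ha
      rw [Finset.mem_coe] at ha ⊢
      rw [hK1mem] at ha
      rw [Finset.mem_filter, hK2mem]
      constructor
      · rw [frq2, hK1K2 a ha, hx₀K]
      · show (a + x₀) + (a + x₀)^q = b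
        rw [frq, ha]
        have hb' : x₀ + x₀^q = b := hx₀
        linear_combination hb' + a * htwo
    · intro c _; linear_combination x₀ * htwo
    · intro a _; linear_combination x₀ * htwo
  have himgtau : K2.image tau ⊆ K1 := by
    intro b hb
    obtain ⟨x, hxK, hx⟩ := Finset.mem_image.mp hb
    rw [hK2mem] at hxK
    rw [← hx, hK1mem]
    show (x + x^q)^q = x + x^q
    rw [frq, ← pow_mul, show q*q = q^2 by ring, hxK]
    ring
  have hK1card : K1.card = q := by
    have h1 : K2.card = (K2.image tau).card * K1.card :=
      card_filter_eq_image_mul K2 tau K1.card htaufib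
    have h2 : q^2 ≤ K1.card * K1.card := by
      rw [← hK2card, h1]
      exact Nat.mul_le_mul_right _ (Finset.card_le_card himgtau)
    have h3 : q^2 = q * q := by ring
    nlinarith [hK1le, h2]
  -- norm map and roots of unity
  set nu : F → F := fun u => u^(q+1) with hnu
  set mu : Finset F := univ.filter (fun z : F => z^(q+1) = 1) with hmu
  have hmule : mu.card ≤ q + 1 := by
    have h := roots_card_le mu (X^(q+1) - Polynomial.C 1)
      (Polynomial.X_pow_sub_C_ne_zero (by omega) 1) ?_
    · rwa [Polynomial.natDegree_X_pow_sub_C] at h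
    · intro x hx
      rw [hmu] at hx
      simp only [Finset.mem_filter] at hx
      simp [hx.2]
  have hq2fact : q^2 = (q+1)*(q-1)+1 := by
    obtain ⟨t, ht⟩ := Nat.exists_eq_add_of_le hq1
    subst ht
    have h1 : 2 + t - 1 = t + 1 := by omega
    rw [h1]; ring
  have hmuK2 : ∀ z : F, z^(q+1) = 1 → z^(q^2) = z ∧ z ≠ 0 := by
    intro z hz
    constructor
    · rw [hq2fact, pow_succ, pow_mul, hz, one_pow, one_mul]
    · intro h0
      rw [h0, zero_pow (by omega)] at hz
      exact one_ne_zero hz.symm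
  set M : Finset F := K2.erase 0 with hM
  have h0K2 : (0:F) ∈ K2 := by rw [hK2mem]; exact zero_pow (by positivity)
  have hMcard : M.card = q^2 - 1 := by
    rw [hM, Finset.card_erase_of_mem h0K2, hK2card]
  have hnumemM : ∀ u ∈ M, nu u ∈ K1.erase 0 := by
    intro u hu
    rw [hM, Finset.mem_erase] at hu
    obtain ⟨hu0, huK⟩ := hu
    rw [hK2mem] at huK
    rw [Finset.mem_erase, hK1mem]
    refine ⟨pow_ne_zero _ hu0, ?_⟩
    show (u^(q+1))^q = u^(q+1)
    rw [← pow_mul, show (q+1)*q = q^2 + q by ring, pow_add, huK, pow_succ]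
    ring
  have hnufib : ∀ b ∈ M.image nu, (M.filter (fun u => nu u = b)).card = mu.card := by
    intro b hb
    obtain ⟨u₀, hu₀M, hu₀⟩ := Finset.mem_image.mp hb
    rw [hM, Finset.mem_erase] at hu₀M
    obtain ⟨hu₀0, hu₀K⟩ := hu₀M
    rw [hK2mem] at hu₀K
    have hb0 : b ≠ 0 := by rw [← hu₀]; exact pow_ne_zero _ hu₀0
    apply Finset.card_nbij' (fun u => u * u₀⁻¹) (fun z => z * u₀)
    · intro u hu
      rw [Finset.mem_coe] at hu ⊢
      rw [Finset.mem_filter] at hu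
      rw [hmu, Finset.mem_filter]
      refine ⟨Finset.mem_univ _, ?_⟩
      rw [mul_pow, inv_pow]
      have h1 : u^(q+1) = b := hu.2
      rw [h1, show u₀^(q+1) = b from hu₀]
      exact mul_inv_cancel₀ hb0
    · intro z hz
      rw [Finset.mem_coe] at hz ⊢
      rw [hmu, Finset.mem_filter] at hz
      obtain ⟨hzK2, hz0⟩ := hmuK2 z hz.2
      rw [Finset.mem_filter, hM, Finset.mem_erase, hK2mem]
      refine ⟨⟨mul_ne_zero hz0 hu₀0, ?_⟩, ?_⟩
      · rw [mul_pow, hzK2, hu₀K]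
      · show (z * u₀)^(q+1) = b
        rw [mul_pow, hz.2, one_mul]
        exact hu₀
    · intro u _; field_simp
    · intro z _; field_simp
  have hsq1 : q^2 - 1 = (q-1)*(q+1) := by
    have h2 : q^2 = (q-1)*(q+1)+(q+1) - q := by
      obtain ⟨t, ht⟩ := Nat.exists_eq_add_of_le hq1
      subst ht
      have h1 : 2 + t - 1 = t + 1 := by omega
      rw [h1]
      have : (t+1)*(2+t+1)+(2+t+1) = (2+t)^2 + (2+t) := by ring
      omega
    omega
  have hK1e0card : (K1.erase 0).card = q - 1 := by
    rw [Finset.card_erase_of_mem, hK1card]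
    rw [hK1mem]
    exact zero_pow (by omega)
  have himgnu : M.image nu ⊆ K1.erase 0 := by
    intro b hb
    obtain ⟨u, huM, hu⟩ := Finset.mem_image.mp hb
    exact hu ▸ hnumemM u huM
  have hMcount : q^2 - 1 = (M.image nu).card * mu.card := by
    rw [← hMcard]
    exact card_filter_eq_image_mul M nu mu.card hnufib
  have hmucard : mu.card = q + 1 := by
    have h1 : (M.image nu).card ≤ q - 1 := by
      rw [← hK1e0card]
      exact Finset.card_le_card himgnu
    have h2 : (M.image nu).card * mu.card ≤ (q-1) * mu.card :=
      Nat.mul_le_mul_right _ h1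
    have h3 : (q-1) * mu.card ≤ (q-1)*(q+1) := Nat.mul_le_mul_left _ hmule
    have h4 : (q-1) * mu.card = (q-1)*(q+1) := by omega
    have hq10 : 0 < q - 1 := by omega
    exact Nat.eq_of_mul_eq_mul_left hq10 h4
  have himgnueq : M.image nu = K1.erase 0 := by
    apply Finset.eq_of_subset_of_card_le himgnu
    have h5 : (M.image nu).card * (q+1) = (q-1)*(q+1) := by
      rw [← hmucard, ← hMcount, hsq1, hmucard]
    have := Nat.eq_of_mul_eq_mul_right (show 0 < q+1 by omega) h5
    omega
  have hfibern : ∀ n ∈ K1.erase 0, (M.filter (fun u => nu u = n)).card = q + 1 := by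
    intro n hn
    rw [hnufib n (himgnueq ▸ hn), hmucard]
  -- trace-zero elements of K1
  set Z : Finset F := K1.filter (fun n : F => ∑ i ∈ Finset.range k, n^(2^i) = 0) with hZ
  obtain ⟨k', hk'⟩ : ∃ k', k = k' + 1 := ⟨k - 1, by omega⟩
  set m2 : ℕ := 2^k' with hm2
  have hq2m : q = 2 * m2 := by rw [hq, hk', hm2, pow_succ]; ring
  have hZle : Z.card ≤ m2 := by
    have h := roots_card_le Z (∑ i ∈ Finset.range k, (X:F[X])^(2^i)) ?_ ?_
    · refine h.trans ?_
      apply Polynomial.natDegree_sum_le_of_forall_le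
      intro i hi
      rw [Polynomial.natDegree_X_pow]
      rw [Finset.mem_range] at hi
      exact Nat.pow_le_pow_right (by norm_num) (by omega)
    · intro hcontra
      have h1 : (∑ i ∈ Finset.range k, (X:F[X])^(2^i)).coeff (2^k') = 1 := by
        rw [Polynomial.finset_sum_coeff]
        rw [Finset.sum_eq_single_of_mem k' (by rw [Finset.mem_range]; omega)]
        · rw [Polynomial.coeff_X_pow, if_pos rfl]
        · intro i _ hne
          rw [Polynomial.coeff_X_pow, if_neg]
          exact fun h => hne (Nat.pow_right_injective (le_refl 2) h.symm)
      rw [hcontra] at h1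
      simp at h1
    · intro x hx
      rw [hZ, Finset.mem_filter] at hx
      rw [Polynomial.eval_finset_sum]
      simp only [Polynomial.eval_pow, Polynomial.eval_X]
      exact hx.2
  set alpha : F → F := fun w => w^2 + w with halpha
  have halphamem : ∀ w ∈ K1, alpha w ∈ Z := by
    intro w hw
    rw [hK1mem] at hw
    rw [hZ, Finset.mem_filter, hK1mem]
    simp only [halpha]
    refine ⟨?_, ?_⟩
    · have h1 : (w^2)^q = w^2 := by rw [← pow_mul, mul_comm, pow_mul, hw]
      rw [frq, h1, hw]
    · rw [tele, ← hq, hw]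
      linear_combination w * htwo
  have halphafib : ∀ b ∈ K1.image alpha, (K1.filter (fun w => alpha w = b)).card = 2 := by
    intro b hb
    obtain ⟨w₀, hw₀K, hw₀⟩ := Finset.mem_image.mp hb
    rw [hK1mem] at hw₀K
    have hw₀' : w₀^2 + w₀ = b := hw₀
    have hset : K1.filter (fun w => alpha w = b) = {w₀, w₀+1} := by
      ext w
      rw [Finset.mem_filter, Finset.mem_insert, Finset.mem_singleton, hK1mem]
      constructor
      · rintro ⟨hwq, hwb⟩
        have hwb' : w^2 + w = b := hwb
        have hfac : (w + w₀) * (w + w₀ + 1) = 0 := by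
          linear_combination hwb' - hw₀' + (w*w₀ + w₀^2 + w₀) * htwo
        rcases mul_eq_zero.mp hfac with h | h
        · left; linear_combination h - w₀ * htwo
        · right; linear_combination h - (w₀+1) * htwo
      · rintro (rfl | rfl)
        · exact ⟨hw₀K, hw₀⟩
        · refine ⟨?_, ?_⟩
          · rw [frq, one_pow, hw₀K]
          · show (w₀+1)^2 + (w₀+1) = b
            linear_combination hw₀' + (w₀ + 1) * htwo
    rw [hset, Finset.card_insert_of_notMem, Finset.card_singleton]
    rw [Finset.mem_singleton]
    exact fun h => one_ne_zero (by linear_combination -h)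
  have himgalpha : K1.image alpha ⊆ Z := by
    intro b hb
    obtain ⟨w, hwK, hw⟩ := Finset.mem_image.mp hb
    exact hw ▸ halphamem w hwK
  have hZcard : Z.card = m2 := by
    have hKcount : K1.card = (K1.image alpha).card * 2 :=
      card_filter_eq_image_mul K1 alpha 2 halphafib
    have h1 := Finset.card_le_card himgalpha
    rw [hK1card] at hKcount
    omega
  -- count B
  have hnuK1 : ∀ u : F, u^(q^2) = u → (u^(q+1))^q = u^(q+1) := by
    intro u huK
    rw [← pow_mul, show (q+1)*q = q^2+q by ring, pow_add, huK, pow_succ]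
    ring
  have h0Z : (0:F) ∈ Z := by
    rw [hZ, Finset.mem_filter, hK1mem]
    refine ⟨zero_pow (by omega), ?_⟩
    refine Finset.sum_eq_zero ?_
    intro i _
    exact zero_pow (by positivity)
  have hBcard : (K2.filter (fun u : F => ∑ i ∈ Finset.range k, (u^(q+1))^(2^i) = 0)).card
      = (m2 - 1)*(q+1) + 1 := by
    have hmapsB : ∀ u ∈ K2.filter (fun u : F => ∑ i ∈ Finset.range k, (u^(q+1))^(2^i) = 0),
        nu u ∈ Z := by
      intro u hu
      rw [Finset.mem_filter, hK2mem] at hu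
      rw [hZ, Finset.mem_filter, hK1mem]
      simp only [hnu]
      exact ⟨hnuK1 u hu.1, hu.2⟩
    rw [Finset.card_eq_sum_card_fiberwise hmapsB]
    have hfibeq : ∀ n ∈ Z,
        ((K2.filter (fun u : F => ∑ i ∈ Finset.range k, (u^(q+1))^(2^i) = 0)).filter
          (fun u => nu u = n)).card = (K2.filter (fun u => nu u = n)).card := by
      intro n hn
      rw [Finset.filter_filter]
      congr 1
      apply Finset.filter_congr
      intro u _
      simp only [hnu]
      constructor
      · exact And.right
      · intro h
        refine ⟨?_, h⟩
        rw [h]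
        rw [hZ, Finset.mem_filter] at hn
        exact hn.2
    rw [Finset.sum_congr rfl hfibeq]
    rw [← Finset.sum_erase_add Z _ h0Z]
    have hzero : (K2.filter (fun u => nu u = 0)).card = 1 := by
      have : K2.filter (fun u => nu u = (0:F)) = {0} := by
        ext u
        rw [Finset.mem_filter, Finset.mem_singleton, hK2mem]
        simp only [hnu]
        constructor
        · rintro ⟨-, h⟩
          exact pow_eq_zero_iff (by omega) |>.mp h
        · rintro rfl
          exact ⟨zero_pow (by positivity), zero_pow (by omega)⟩
      rw [this, Finset.card_singleton]
    have hrest : ∀ n ∈ Z.erase 0, (K2.filter (fun u => nu u = n)).card = q + 1 := by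
      intro n hn
      rw [Finset.mem_erase] at hn
      have heq : K2.filter (fun u => nu u = n) = M.filter (fun u => nu u = n) := by
        rw [hM, Finset.filter_erase, Finset.erase_eq_of_notMem]
        intro h0
        rw [Finset.mem_filter] at h0
        apply hn.1
        rw [← h0.2]
        simp only [hnu]
        exact zero_pow (show q+1 ≠ 0 by omega)
      rw [heq]
      apply hfibern
      rw [Finset.mem_erase]
      refine ⟨hn.1, ?_⟩
      have := hn.2
      rw [hZ, Finset.mem_filter] at this
      exact this.1
    rw [Finset.sum_congr rfl hrest, Finset.sum_const, smul_eq_mul, hzero,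
      Finset.card_erase_of_mem h0Z, hZcard]
  rw [hBcard]
  obtain ⟨t, ht⟩ : ∃ t, m2 = t + 1 := ⟨m2 - 1, by rw [hm2]; have := Nat.one_le_two_pow (n := k'); omega⟩
  have key : q^4 = 2*(q^2 * ((m2-1)*(q+1) + 1)) + q^3 := by
    have hm1 : m2 - 1 = t := by omega
    rw [hm1, hq2m, ht]
    ring
  omega
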